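/- Let λ be a partition with n parts, extended to n+m parts by appending m zeros, and let μ = (λ₁,...,λₙ, 1^r, 0^{m-r}) for 0 ≤ r ≤ m. Then ∏_{1≤i<j≤n+m} (μᵢ - μⱼ + j - i)/(λᵢ - λⱼ + j - i) = ∏_{i=1}^{n} (λᵢ + n - i)/(λᵢ + n + r - i) · ∏_{i=n+1}^{n+r} (n + m + 1 - i)/(n + r + 1 - i). -/

import Mathlib

open Finset

private lemma tel_down (g : ℕ → ℚ) (hg : ∀ t, g t ≠ 0) (k : ℕ) :
    ∏ t ∈ Finset.range k, (g t / g (t + 1)) = g 0 / g k := by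
  induction k with
  | zero => rw [Finset.prod_range_zero, div_self (hg 0)]
  | succ k ih =>
      rw [Finset.prod_range_succ, ih, div_mul_div_cancel₀ (hg k)]

private lemma tel_up (g : ℕ → ℚ) (hg : ∀ t, g t ≠ 0) (k : ℕ) :
    ∏ t ∈ Finset.range k, (g (t + 1) / g t) = g k / g 0 := by
  induction k with
  | zero => rw [Finset.prod_range_zero, div_self (hg 0)]
  | succ k ih =>
      rw [Finset.prod_range_succ, ih, mul_comm, div_mul_div_cancel₀ (hg k)]

theorem first_dual_path_ratio (n m r : ℕ) (hr : r ≤ m) (lam : ℕ → ℕ)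
    (hpart : ∀ i j : ℕ, 1 ≤ i → i ≤ j → j ≤ n → lam j ≤ lam i)
    (hpos : ∀ i : ℕ, 1 ≤ i → i ≤ n → 1 ≤ lam i) :
    (∏ p ∈ (Finset.Icc 1 (n + m) ×ˢ Finset.Icc 1 (n + m)).filter
        (fun p : ℕ × ℕ => p.1 < p.2),
      (((if p.1 ≤ n then (lam p.1 : ℚ) else if p.1 ≤ n + r then 1 else 0) -
          (if p.2 ≤ n then (lam p.2 : ℚ) else if p.2 ≤ n + r then 1 else 0) +
          (p.2 : ℚ) - p.1) /
        ((if p.1 ≤ n then (lam p.1 : ℚ) else 0) -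
          (if p.2 ≤ n then (lam p.2 : ℚ) else 0) + (p.2 : ℚ) - p.1))) =
      (∏ i ∈ Finset.Icc 1 n,
          (((lam i : ℚ) + n - i) / ((lam i : ℚ) + n + r - i))) *
        ∏ i ∈ Finset.Icc (n + 1) (n + r),
          (((n : ℚ) + m + 1 - i) / ((n : ℚ) + r + 1 - i)) := by
  classical
  set μ : ℕ → ℚ := fun i => if i ≤ n then (lam i : ℚ) else if i ≤ n + r then 1 else 0
    with hμ
  set ν : ℕ → ℚ := fun i => if i ≤ n then (lam i : ℚ) else 0 with hν
  have hμlow : ∀ j, j ≤ n → μ j = (lam j : ℚ) := fun j h => by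
    simp only [hμ]; rw [if_pos h]
  have hμmid : ∀ j, n < j → j ≤ n + r → μ j = 1 := fun j h1 h2 => by
    simp only [hμ]; rw [if_neg (by omega), if_pos h2]
  have hμhigh : ∀ j, n + r < j → μ j = 0 := fun j h => by
    simp only [hμ]; rw [if_neg (by omega), if_neg (by omega)]
  have hνlow : ∀ j, j ≤ n → ν j = (lam j : ℚ) := fun j h => by
    simp only [hν]; rw [if_pos h]
  have hνhigh : ∀ j, n < j → ν j = 0 := fun j h => by
    simp only [hν]; rw [if_neg (by omega)]
  have hIcc : ∀ k : ℕ, Finset.Icc 1 k = Finset.Ioc 0 k := by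
    intro k; ext x; simp [Nat.lt_iff_add_one_le]
  have hIcc' : ∀ a k : ℕ, Finset.Icc (a + 1) k = Finset.Ioc a k := by
    intro a k; ext x; simp only [Finset.mem_Icc, Finset.mem_Ioc]; omega
  show (∏ p ∈ (Finset.Icc 1 (n + m) ×ˢ Finset.Icc 1 (n + m)).filter
        (fun p : ℕ × ℕ => p.1 < p.2),
      ((μ p.1 - μ p.2 + (p.2 : ℚ) - p.1) / (ν p.1 - ν p.2 + (p.2 : ℚ) - p.1))) = _
  rw [Finset.prod_filter, Finset.prod_product, hIcc]
  have hνpos : ∀ i j : ℕ, 0 < i → i < j → j ≤ n + m →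
      0 < ν i - ν j + (j : ℚ) - i := by
    intro i j hi hij hj
    have hji : (i : ℚ) < j := by exact_mod_cast hij
    by_cases hjn : j ≤ n
    · have hin : i ≤ n := le_trans hij.le hjn
      have hlam : lam j ≤ lam i := hpart i j hi hij.le hjn
      have h2 : (lam j : ℚ) ≤ lam i := by exact_mod_cast hlam
      rw [hνlow i hin, hνlow j hjn]
      linarith
    · by_cases hin : i ≤ n
      · have h0 : (0 : ℚ) ≤ (lam i : ℚ) := by positivity
        rw [hνlow i hin, hνhigh j (by omega)]
        linarith
      · rw [hνhigh i (by omega), hνhigh j (by omega)]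
        linarith
  have hinner : ∀ i ∈ Finset.Ioc 0 (n + m),
      (∏ j ∈ Finset.Ioc 0 (n + m),
        if i < j then (μ i - μ j + (j : ℚ) - i) / (ν i - ν j + (j : ℚ) - i) else 1)
      = if i ≤ n then ((lam i : ℚ) + n - i) / ((lam i : ℚ) + n + r - i)
        else if i ≤ n + r then ((n : ℚ) + m + 1 - i) / ((n : ℚ) + r + 1 - i)
        else 1 := by
    intro i hi
    simp only [Finset.mem_Ioc] at hi
    obtain ⟨hi0, him⟩ := hi
    have hsplit : (∏ j ∈ Finset.Ioc 0 (n + m),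
        if i < j then (μ i - μ j + (j : ℚ) - i) / (ν i - ν j + (j : ℚ) - i) else 1)
        = (∏ j ∈ Finset.Ioc 0 n,
            if i < j then (μ i - μ j + (j : ℚ) - i) / (ν i - ν j + (j : ℚ) - i) else 1) *
          (∏ j ∈ Finset.Ioc n (n + r),
            if i < j then (μ i - μ j + (j : ℚ) - i) / (ν i - ν j + (j : ℚ) - i) else 1) *
          (∏ j ∈ Finset.Ioc (n + r) (n + m),
            if i < j then (μ i - μ j + (j : ℚ) - i) / (ν i - ν j + (j : ℚ) - i) else 1) := by
      rw [Finset.prod_Ioc_consecutive _ (Nat.zero_le n) (by omega),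
        Finset.prod_Ioc_consecutive _ (Nat.zero_le (n + r)) (by omega)]
    rw [hsplit]
    by_cases hin : i ≤ n
    · rw [if_pos hin]
      have h1 : (∏ j ∈ Finset.Ioc 0 n,
          if i < j then (μ i - μ j + (j : ℚ) - i) / (ν i - ν j + (j : ℚ) - i) else 1) = 1 := by
        apply Finset.prod_eq_one
        intro j hj
        simp only [Finset.mem_Ioc] at hj
        split_ifs with hij
        · have hd := hνpos i j hi0 hij (by omega)
          rw [hνlow i hin, hνlow j hj.2] at hd
          rw [hμlow i hin, hμlow j hj.2, hνlow i hin, hνlow j hj.2]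
          exact div_self (ne_of_gt hd)
        · rfl
      have h3 : (∏ j ∈ Finset.Ioc (n + r) (n + m),
          if i < j then (μ i - μ j + (j : ℚ) - i) / (ν i - ν j + (j : ℚ) - i) else 1) = 1 := by
        apply Finset.prod_eq_one
        intro j hj
        simp only [Finset.mem_Ioc] at hj
        have hij : i < j := by omega
        rw [if_pos hij]
        have hd := hνpos i j hi0 hij hj.2
        rw [hνlow i hin, hνhigh j (by omega)] at hd
        rw [hμlow i hin, hμhigh j hj.1, hνlow i hin, hνhigh j (by omega)]
        exact div_self (ne_of_gt hd)
      rw [h1, h3, one_mul, mul_one]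
      have hrange : Finset.Ioc n (n + r) = Finset.Ico (n + 1) (n + r + 1) := by
        ext x; simp only [Finset.mem_Ioc, Finset.mem_Ico]; omega
      rw [hrange, Finset.prod_Ico_eq_prod_range]
      have hlen : n + r + 1 - (n + 1) = r := by omega
      rw [hlen]
      set g : ℕ → ℚ := fun t => (lam i : ℚ) + n + t - i with hg
      have hi' : (i : ℚ) ≤ n := by exact_mod_cast hin
      have hlam1 : (1 : ℚ) ≤ (lam i : ℚ) := by exact_mod_cast hpos i hi0 hin
      have hgne : ∀ t, g t ≠ 0 := by
        intro t
        have ht : (0 : ℚ) ≤ t := by positivity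
        have : (0 : ℚ) < g t := by simp only [hg]; linarith
        exact ne_of_gt this
      have heach : ∀ t ∈ Finset.range r,
          (if i < n + 1 + t then
            (μ i - μ (n + 1 + t) + ((n + 1 + t : ℕ) : ℚ) - i) /
            (ν i - ν (n + 1 + t) + ((n + 1 + t : ℕ) : ℚ) - i) else 1) = g t / g (t + 1) := by
        intro t ht
        simp only [Finset.mem_range] at ht
        rw [if_pos (by omega), hμlow i hin, hνlow i hin,
          hμmid (n + 1 + t) (by omega) (by omega), hνhigh (n + 1 + t) (by omega)]
        simp only [hg]
        push_cast
        congr 1 <;> ring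
      rw [Finset.prod_congr rfl heach, tel_down g hgne r]
      simp only [hg]
      push_cast
      ring_nf
    · rw [if_neg hin]
      by_cases hinr : i ≤ n + r
      · rw [if_pos hinr]
        have hi' : (i : ℚ) ≤ (n : ℚ) + r := by exact_mod_cast hinr
        have h1 : (∏ j ∈ Finset.Ioc 0 n,
            if i < j then (μ i - μ j + (j : ℚ) - i) / (ν i - ν j + (j : ℚ) - i) else 1) = 1 := by
          apply Finset.prod_eq_one
          intro j hj
          simp only [Finset.mem_Ioc] at hj
          rw [if_neg (by omega)]
        have h2 : (∏ j ∈ Finset.Ioc n (n + r),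
            if i < j then (μ i - μ j + (j : ℚ) - i) / (ν i - ν j + (j : ℚ) - i) else 1) = 1 := by
          apply Finset.prod_eq_one
          intro j hj
          simp only [Finset.mem_Ioc] at hj
          split_ifs with hij
          · have hd := hνpos i j hi0 hij (by omega)
            rw [hνhigh i (by omega), hνhigh j (by omega)] at hd
            rw [hμmid i (by omega) hinr, hμmid j hj.1 hj.2,
              hνhigh i (by omega), hνhigh j (by omega)]
            have he : (1 : ℚ) - 1 + (j : ℚ) - i = 0 - 0 + (j : ℚ) - i := by ring
            rw [he]
            exact div_self (ne_of_gt hd)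
          · rfl
        rw [h1, h2, one_mul, one_mul]
        have hrange : Finset.Ioc (n + r) (n + m) = Finset.Ico (n + r + 1) (n + m + 1) := by
          ext x; simp only [Finset.mem_Ioc, Finset.mem_Ico]; omega
        rw [hrange, Finset.prod_Ico_eq_prod_range]
        have hlen : n + m + 1 - (n + r + 1) = m - r := by omega
        rw [hlen]
        set g : ℕ → ℚ := fun t => (n : ℚ) + r + 1 + t - i with hg
        have hgne : ∀ t, g t ≠ 0 := by
          intro t
          have ht : (0 : ℚ) ≤ t := by positivity
          have : (0 : ℚ) < g t := by simp only [hg]; linarith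
          exact ne_of_gt this
        have heach : ∀ t ∈ Finset.range (m - r),
            (if i < n + r + 1 + t then
              (μ i - μ (n + r + 1 + t) + ((n + r + 1 + t : ℕ) : ℚ) - i) /
              (ν i - ν (n + r + 1 + t) + ((n + r + 1 + t : ℕ) : ℚ) - i) else 1)
            = g (t + 1) / g t := by
          intro t ht
          rw [if_pos (by omega), hμmid i (by omega) hinr, hνhigh i (by omega),
            hμhigh (n + r + 1 + t) (by omega), hνhigh (n + r + 1 + t) (by omega)]
          simp only [hg]
          push_cast
          congr 1 <;> ring
        rw [Finset.prod_congr rfl heach, tel_up g hgne (m - r)]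
        simp only [hg]
        rw [Nat.cast_sub hr]
        push_cast
        ring_nf
      · rw [if_neg hinr]
        have h1 : (∏ j ∈ Finset.Ioc 0 n,
            if i < j then (μ i - μ j + (j : ℚ) - i) / (ν i - ν j + (j : ℚ) - i) else 1) = 1 :=
          Finset.prod_eq_one fun j hj => by
            simp only [Finset.mem_Ioc] at hj; rw [if_neg (by omega)]
        have h2 : (∏ j ∈ Finset.Ioc n (n + r),
            if i < j then (μ i - μ j + (j : ℚ) - i) / (ν i - ν j + (j : ℚ) - i) else 1) = 1 :=
          Finset.prod_eq_one fun j hj => by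
            simp only [Finset.mem_Ioc] at hj; rw [if_neg (by omega)]
        have h3 : (∏ j ∈ Finset.Ioc (n + r) (n + m),
            if i < j then (μ i - μ j + (j : ℚ) - i) / (ν i - ν j + (j : ℚ) - i) else 1) = 1 := by
          apply Finset.prod_eq_one
          intro j hj
          simp only [Finset.mem_Ioc] at hj
          split_ifs with hij
          · have hd := hνpos i j hi0 hij hj.2
            rw [hνhigh i (by omega), hνhigh j (by omega)] at hd
            rw [hμhigh i (by omega), hμhigh j (by omega),
              hνhigh i (by omega), hνhigh j (by omega)]
            exact div_self (ne_of_gt hd)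
          · rfl
        rw [h1, h2, h3]
        norm_num
  rw [Finset.prod_congr rfl hinner]
  have hsplit : (∏ i ∈ Finset.Ioc 0 (n + m),
      if i ≤ n then ((lam i : ℚ) + n - i) / ((lam i : ℚ) + n + r - i)
      else if i ≤ n + r then ((n : ℚ) + m + 1 - i) / ((n : ℚ) + r + 1 - i) else 1)
      = (∏ i ∈ Finset.Ioc 0 n,
          if i ≤ n then ((lam i : ℚ) + n - i) / ((lam i : ℚ) + n + r - i)
          else if i ≤ n + r then ((n : ℚ) + m + 1 - i) / ((n : ℚ) + r + 1 - i) else 1) *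
        (∏ i ∈ Finset.Ioc n (n + r),
          if i ≤ n then ((lam i : ℚ) + n - i) / ((lam i : ℚ) + n + r - i)
          else if i ≤ n + r then ((n : ℚ) + m + 1 - i) / ((n : ℚ) + r + 1 - i) else 1) *
        (∏ i ∈ Finset.Ioc (n + r) (n + m),
          if i ≤ n then ((lam i : ℚ) + n - i) / ((lam i : ℚ) + n + r - i)
          else if i ≤ n + r then ((n : ℚ) + m + 1 - i) / ((n : ℚ) + r + 1 - i) else 1) := by
    rw [Finset.prod_Ioc_consecutive _ (Nat.zero_le n) (by omega),
      Finset.prod_Ioc_consecutive _ (Nat.zero_le (n + r)) (by omega)]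
  rw [hsplit]
  have hp1 : (∏ i ∈ Finset.Ioc 0 n,
      if i ≤ n then ((lam i : ℚ) + n - i) / ((lam i : ℚ) + n + r - i)
      else if i ≤ n + r then ((n : ℚ) + m + 1 - i) / ((n : ℚ) + r + 1 - i) else 1)
      = ∏ i ∈ Finset.Icc 1 n, (((lam i : ℚ) + n - i) / ((lam i : ℚ) + n + r - i)) := by
    rw [hIcc n]
    exact Finset.prod_congr rfl fun i hi => by
      simp only [Finset.mem_Ioc] at hi; rw [if_pos hi.2]
  have hp2 : (∏ i ∈ Finset.Ioc n (n + r),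
      if i ≤ n then ((lam i : ℚ) + n - i) / ((lam i : ℚ) + n + r - i)
      else if i ≤ n + r then ((n : ℚ) + m + 1 - i) / ((n : ℚ) + r + 1 - i) else 1)
      = ∏ i ∈ Finset.Icc (n + 1) (n + r), (((n : ℚ) + m + 1 - i) / ((n : ℚ) + r + 1 - i)) := by
    rw [hIcc' n (n + r)]
    exact Finset.prod_congr rfl fun i hi => by
      simp only [Finset.mem_Ioc] at hi
      rw [if_neg (by omega), if_pos hi.2]
  have hp3 : (∏ i ∈ Finset.Ioc (n + r) (n + m),
      if i ≤ n then ((lam i : ℚ) + n - i) / ((lam i : ℚ) + n + r - i)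
      else if i ≤ n + r then ((n : ℚ) + m + 1 - i) / ((n : ℚ) + r + 1 - i) else 1) = 1 :=
    Finset.prod_eq_one fun i hi => by
      simp only [Finset.mem_Ioc] at hi
      rw [if_neg (by omega), if_neg (by omega)]
  rw [hp1, hp2, hp3, mul_one]
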